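/- For every root α ∈ R, the number of ordered pairs (l₁, l₂) ∈ ℒ × ℒ with l₁ - l₂ = α is exactly 6. (Proposition 2.2: every root on a smooth cubic surface can be written as the difference [L₁] - [L₂] of a pair of skew lines in exactly 6 different ways.) -/

import Mathlib

/-- The intersection form on the lattice `I^{1,6} ≅ H²(S,ℤ)` of a smooth cubic surface. -/
def B (x y : Fin 7 → ℤ) : ℤ := x 0 * y 0 - ∑ i : Fin 6, x i.succ * y i.succ

/-- The hyperplane class `h = 3e₀ - e₁ - ⋯ - e₆`. -/
def h : Fin 7 → ℤ := fun j => if j = 0 then 3 else -1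

/-- The root system `R = {α : B(α,α) = -2, B(α,h) = 0}` (primitive vanishing cycles). -/
def R : Set (Fin 7 → ℤ) := {α | B α α = -2 ∧ B α h = 0}

/-- The set of line classes `{l : B(l,l) = -1, B(l,h) = 1}`. -/
def Lines : Set (Fin 7 → ℤ) := {l | B l l = -1 ∧ B l h = 1}

/-! ### Auxiliary material -/

lemma B_apply (x y : Fin 7 → ℤ) :
    B x y = x 0 * y 0 - (x 1 * y 1 + x 2 * y 2 + x 3 * y 3 + x 4 * y 4 + x 5 * y 5 + x 6 * y 6) := by
  simp [B, Fin.sum_univ_six]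

lemma abs_le_one_of_sq (t : ℤ) (ht : t * t ≤ 3) : -1 ≤ t ∧ t ≤ 1 := by
  constructor <;> by_contra h' <;> push_neg at h' <;> nlinarith

lemma consec_nonneg (t : ℤ) : 0 ≤ t * (t + 1) := by
  rcases le_or_gt t 0 with ht | ht
  · rcases le_or_gt (t + 1) 0 with h2 | h2
    · nlinarith
    · have : t = 0 := by omega
      simp [this]
  · exact mul_nonneg (by omega) (by omega)

lemma consec_nonneg' (t : ℤ) : 0 ≤ t * (t - 1) := by
  have := consec_nonneg (-t); nlinarith

lemma consec_mem (t : ℤ) (ht : t * (t + 1) = 0) : -1 ≤ t ∧ t ≤ 1 := by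
  rcases mul_eq_zero.mp ht with h' | h' <;> omega

lemma consec_mem' (t : ℤ) (ht : t * (t - 1) = 0) : -1 ≤ t ∧ t ≤ 1 := by
  rcases mul_eq_zero.mp ht with h' | h' <;> omega

lemma cs6 (b1 b2 b3 b4 b5 b6 : ℤ) :
    (b1+b2+b3+b4+b5+b6)*(b1+b2+b3+b4+b5+b6) ≤
      6*(b1*b1+b2*b2+b3*b3+b4*b4+b5*b5+b6*b6) := by
  nlinarith [sq_nonneg (b1-b2), sq_nonneg (b1-b3), sq_nonneg (b1-b4), sq_nonneg (b1-b5),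
    sq_nonneg (b1-b6), sq_nonneg (b2-b3), sq_nonneg (b2-b4), sq_nonneg (b2-b5),
    sq_nonneg (b2-b6), sq_nonneg (b3-b4), sq_nonneg (b3-b5), sq_nonneg (b3-b6),
    sq_nonneg (b4-b5), sq_nonneg (b4-b6), sq_nonneg (b5-b6)]

def mk (a b1 b2 b3 b4 b5 b6 : ℤ) : Fin 7 → ℤ := ![a,b1,b2,b3,b4,b5,b6]

lemma vec_eta (l : Fin 7 → ℤ) : l = mk (l 0) (l 1) (l 2) (l 3) (l 4) (l 5) (l 6) := by
  funext j; fin_cases j <;> rfl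

def LinesL : List (Fin 7 → ℤ) := [
  mk 0 1 0 0 0 0 0,
  mk 0 0 1 0 0 0 0,
  mk 0 0 0 1 0 0 0,
  mk 0 0 0 0 1 0 0,
  mk 0 0 0 0 0 1 0,
  mk 0 0 0 0 0 0 1,
  mk 1 (-1) (-1) 0 0 0 0,
  mk 1 (-1) 0 (-1) 0 0 0,
  mk 1 (-1) 0 0 (-1) 0 0,
  mk 1 (-1) 0 0 0 (-1) 0,
  mk 1 (-1) 0 0 0 0 (-1),
  mk 1 0 (-1) (-1) 0 0 0,
  mk 1 0 (-1) 0 (-1) 0 0,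
  mk 1 0 (-1) 0 0 (-1) 0,
  mk 1 0 (-1) 0 0 0 (-1),
  mk 1 0 0 (-1) (-1) 0 0,
  mk 1 0 0 (-1) 0 (-1) 0,
  mk 1 0 0 (-1) 0 0 (-1),
  mk 1 0 0 0 (-1) (-1) 0,
  mk 1 0 0 0 (-1) 0 (-1),
  mk 1 0 0 0 0 (-1) (-1),
  mk 2 0 (-1) (-1) (-1) (-1) (-1),
  mk 2 (-1) 0 (-1) (-1) (-1) (-1),
  mk 2 (-1) (-1) 0 (-1) (-1) (-1),
  mk 2 (-1) (-1) (-1) 0 (-1) (-1),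
  mk 2 (-1) (-1) (-1) (-1) 0 (-1),
  mk 2 (-1) (-1) (-1) (-1) (-1) 0]
def RootsL : List (Fin 7 → ℤ) := [
  mk 0 1 (-1) 0 0 0 0,
  mk 0 1 0 (-1) 0 0 0,
  mk 0 1 0 0 (-1) 0 0,
  mk 0 1 0 0 0 (-1) 0,
  mk 0 1 0 0 0 0 (-1),
  mk 0 (-1) 1 0 0 0 0,
  mk 0 0 1 (-1) 0 0 0,
  mk 0 0 1 0 (-1) 0 0,
  mk 0 0 1 0 0 (-1) 0,
  mk 0 0 1 0 0 0 (-1),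
  mk 0 (-1) 0 1 0 0 0,
  mk 0 0 (-1) 1 0 0 0,
  mk 0 0 0 1 (-1) 0 0,
  mk 0 0 0 1 0 (-1) 0,
  mk 0 0 0 1 0 0 (-1),
  mk 0 (-1) 0 0 1 0 0,
  mk 0 0 (-1) 0 1 0 0,
  mk 0 0 0 (-1) 1 0 0,
  mk 0 0 0 0 1 (-1) 0,
  mk 0 0 0 0 1 0 (-1),
  mk 0 (-1) 0 0 0 1 0,
  mk 0 0 (-1) 0 0 1 0,
  mk 0 0 0 (-1) 0 1 0,
  mk 0 0 0 0 (-1) 1 0,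
  mk 0 0 0 0 0 1 (-1),
  mk 0 (-1) 0 0 0 0 1,
  mk 0 0 (-1) 0 0 0 1,
  mk 0 0 0 (-1) 0 0 1,
  mk 0 0 0 0 (-1) 0 1,
  mk 0 0 0 0 0 (-1) 1,
  mk 1 (-1) (-1) (-1) 0 0 0,
  mk (-1) 1 1 1 0 0 0,
  mk 1 (-1) (-1) 0 (-1) 0 0,
  mk (-1) 1 1 0 1 0 0,
  mk 1 (-1) (-1) 0 0 (-1) 0,
  mk (-1) 1 1 0 0 1 0,
  mk 1 (-1) (-1) 0 0 0 (-1),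
  mk (-1) 1 1 0 0 0 1,
  mk 1 (-1) 0 (-1) (-1) 0 0,
  mk (-1) 1 0 1 1 0 0,
  mk 1 (-1) 0 (-1) 0 (-1) 0,
  mk (-1) 1 0 1 0 1 0,
  mk 1 (-1) 0 (-1) 0 0 (-1),
  mk (-1) 1 0 1 0 0 1,
  mk 1 (-1) 0 0 (-1) (-1) 0,
  mk (-1) 1 0 0 1 1 0,
  mk 1 (-1) 0 0 (-1) 0 (-1),
  mk (-1) 1 0 0 1 0 1,
  mk 1 (-1) 0 0 0 (-1) (-1),
  mk (-1) 1 0 0 0 1 1,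
  mk 1 0 (-1) (-1) (-1) 0 0,
  mk (-1) 0 1 1 1 0 0,
  mk 1 0 (-1) (-1) 0 (-1) 0,
  mk (-1) 0 1 1 0 1 0,
  mk 1 0 (-1) (-1) 0 0 (-1),
  mk (-1) 0 1 1 0 0 1,
  mk 1 0 (-1) 0 (-1) (-1) 0,
  mk (-1) 0 1 0 1 1 0,
  mk 1 0 (-1) 0 (-1) 0 (-1),
  mk (-1) 0 1 0 1 0 1,
  mk 1 0 (-1) 0 0 (-1) (-1),
  mk (-1) 0 1 0 0 1 1,
  mk 1 0 0 (-1) (-1) (-1) 0,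
  mk (-1) 0 0 1 1 1 0,
  mk 1 0 0 (-1) (-1) 0 (-1),
  mk (-1) 0 0 1 1 0 1,
  mk 1 0 0 (-1) 0 (-1) (-1),
  mk (-1) 0 0 1 0 1 1,
  mk 1 0 0 0 (-1) (-1) (-1),
  mk (-1) 0 0 0 1 1 1,
  mk 2 (-1) (-1) (-1) (-1) (-1) (-1),
  mk (-2) 1 1 1 1 1 1]

set_option maxRecDepth 80000 in
set_option maxHeartbeats 1000000 in
lemma dec_lines : ∀ a ∈ Finset.Icc (0:ℤ) 2, ∀ b1 ∈ Finset.Icc (-1:ℤ) 1,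
    ∀ b2 ∈ Finset.Icc (-1:ℤ) 1, ∀ b3 ∈ Finset.Icc (-1:ℤ) 1, ∀ b4 ∈ Finset.Icc (-1:ℤ) 1,
    ∀ b5 ∈ Finset.Icc (-1:ℤ) 1, ∀ b6 ∈ Finset.Icc (-1:ℤ) 1,
    a*a - (b1*b1+b2*b2+b3*b3+b4*b4+b5*b5+b6*b6) = -1 → 3*a + (b1+b2+b3+b4+b5+b6) = 1 →
    mk a b1 b2 b3 b4 b5 b6 ∈ LinesL := by decide

set_option maxRecDepth 80000 in
set_option maxHeartbeats 2000000 in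
lemma dec_roots : ∀ a ∈ Finset.Icc (-2:ℤ) 2, ∀ b1 ∈ Finset.Icc (-1:ℤ) 1,
    ∀ b2 ∈ Finset.Icc (-1:ℤ) 1, ∀ b3 ∈ Finset.Icc (-1:ℤ) 1, ∀ b4 ∈ Finset.Icc (-1:ℤ) 1,
    ∀ b5 ∈ Finset.Icc (-1:ℤ) 1, ∀ b6 ∈ Finset.Icc (-1:ℤ) 1,
    a*a - (b1*b1+b2*b2+b3*b3+b4*b4+b5*b5+b6*b6) = -2 → 3*a + (b1+b2+b3+b4+b5+b6) = 0 →
    mk a b1 b2 b3 b4 b5 b6 ∈ RootsL := by decide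

lemma line_key (a b1 b2 b3 b4 b5 b6 : ℤ)
    (e1 : a*a - (b1*b1+b2*b2+b3*b3+b4*b4+b5*b5+b6*b6) = -1)
    (e2 : 3*a + (b1+b2+b3+b4+b5+b6) = 1) :
    mk a b1 b2 b3 b4 b5 b6 ∈ LinesL := by
  have hcs := cs6 b1 b2 b3 b4 b5 b6
  have ha0 : 0 ≤ a := by by_contra h'; push_neg at h'; nlinarith
  have ha2 : a ≤ 2 := by by_contra h'; push_neg at h'; nlinarith
  have hb : (-1 ≤ b1 ∧ b1 ≤ 1) ∧ (-1 ≤ b2 ∧ b2 ≤ 1) ∧ (-1 ≤ b3 ∧ b3 ≤ 1) ∧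
      (-1 ≤ b4 ∧ b4 ≤ 1) ∧ (-1 ≤ b5 ∧ b5 ≤ 1) ∧ (-1 ≤ b6 ∧ b6 ≤ 1) := by
    rcases (by omega : a ≤ 1 ∨ a = 2) with h' | h'
    · have hq : b1*b1+b2*b2+b3*b3+b4*b4+b5*b5+b6*b6 ≤ 2 := by nlinarith
      have n1 := mul_self_nonneg b1; have n2 := mul_self_nonneg b2
      have n3 := mul_self_nonneg b3; have n4 := mul_self_nonneg b4
      have n5 := mul_self_nonneg b5; have n6 := mul_self_nonneg b6
      exact ⟨abs_le_one_of_sq _ (by linarith), abs_le_one_of_sq _ (by linarith),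
        abs_le_one_of_sq _ (by linarith), abs_le_one_of_sq _ (by linarith),
        abs_le_one_of_sq _ (by linarith), abs_le_one_of_sq _ (by linarith)⟩
    · subst h'
      have h0 : b1*(b1+1) + b2*(b2+1) + b3*(b3+1) + b4*(b4+1) + b5*(b5+1) + b6*(b6+1) = 0 := by
        linear_combination e2 - e1
      have n1 := consec_nonneg b1; have n2 := consec_nonneg b2
      have n3 := consec_nonneg b3; have n4 := consec_nonneg b4
      have n5 := consec_nonneg b5; have n6 := consec_nonneg b6
      exact ⟨consec_mem _ (by linarith), consec_mem _ (by linarith),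
        consec_mem _ (by linarith), consec_mem _ (by linarith),
        consec_mem _ (by linarith), consec_mem _ (by linarith)⟩
  obtain ⟨hb1, hb2, hb3, hb4, hb5, hb6⟩ := hb
  exact dec_lines a (by simp [Finset.mem_Icc]; omega)
    b1 (by simp [Finset.mem_Icc]; omega) b2 (by simp [Finset.mem_Icc]; omega)
    b3 (by simp [Finset.mem_Icc]; omega) b4 (by simp [Finset.mem_Icc]; omega)
    b5 (by simp [Finset.mem_Icc]; omega) b6 (by simp [Finset.mem_Icc]; omega) e1 e2

lemma root_key (a b1 b2 b3 b4 b5 b6 : ℤ)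
    (e1 : a*a - (b1*b1+b2*b2+b3*b3+b4*b4+b5*b5+b6*b6) = -2)
    (e2 : 3*a + (b1+b2+b3+b4+b5+b6) = 0) :
    mk a b1 b2 b3 b4 b5 b6 ∈ RootsL := by
  have hcs := cs6 b1 b2 b3 b4 b5 b6
  have ha0 : -2 ≤ a := by by_contra h'; push_neg at h'; nlinarith
  have ha2 : a ≤ 2 := by by_contra h'; push_neg at h'; nlinarith
  have hb : (-1 ≤ b1 ∧ b1 ≤ 1) ∧ (-1 ≤ b2 ∧ b2 ≤ 1) ∧ (-1 ≤ b3 ∧ b3 ≤ 1) ∧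
      (-1 ≤ b4 ∧ b4 ≤ 1) ∧ (-1 ≤ b5 ∧ b5 ≤ 1) ∧ (-1 ≤ b6 ∧ b6 ≤ 1) := by
    rcases (by omega : a = -2 ∨ (-1 ≤ a ∧ a ≤ 1) ∨ a = 2) with h' | h' | h'
    · subst h'
      have h0 : b1*(b1-1) + b2*(b2-1) + b3*(b3-1) + b4*(b4-1) + b5*(b5-1) + b6*(b6-1) = 0 := by
        linear_combination -e2 - e1
      have n1 := consec_nonneg' b1; have n2 := consec_nonneg' b2
      have n3 := consec_nonneg' b3; have n4 := consec_nonneg' b4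
      have n5 := consec_nonneg' b5; have n6 := consec_nonneg' b6
      exact ⟨consec_mem' _ (by linarith), consec_mem' _ (by linarith),
        consec_mem' _ (by linarith), consec_mem' _ (by linarith),
        consec_mem' _ (by linarith), consec_mem' _ (by linarith)⟩
    · have hq : b1*b1+b2*b2+b3*b3+b4*b4+b5*b5+b6*b6 ≤ 3 := by nlinarith
      have n1 := mul_self_nonneg b1; have n2 := mul_self_nonneg b2
      have n3 := mul_self_nonneg b3; have n4 := mul_self_nonneg b4
      have n5 := mul_self_nonneg b5; have n6 := mul_self_nonneg b6
      exact ⟨abs_le_one_of_sq _ (by linarith), abs_le_one_of_sq _ (by linarith),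
        abs_le_one_of_sq _ (by linarith), abs_le_one_of_sq _ (by linarith),
        abs_le_one_of_sq _ (by linarith), abs_le_one_of_sq _ (by linarith)⟩
    · subst h'
      have h0 : b1*(b1+1) + b2*(b2+1) + b3*(b3+1) + b4*(b4+1) + b5*(b5+1) + b6*(b6+1) = 0 := by
        linear_combination e2 - e1
      have n1 := consec_nonneg b1; have n2 := consec_nonneg b2
      have n3 := consec_nonneg b3; have n4 := consec_nonneg b4
      have n5 := consec_nonneg b5; have n6 := consec_nonneg b6
      exact ⟨consec_mem _ (by linarith), consec_mem _ (by linarith),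
        consec_mem _ (by linarith), consec_mem _ (by linarith),
        consec_mem _ (by linarith), consec_mem _ (by linarith)⟩
  obtain ⟨hb1, hb2, hb3, hb4, hb5, hb6⟩ := hb
  exact dec_roots a (by simp [Finset.mem_Icc]; omega)
    b1 (by simp [Finset.mem_Icc]; omega) b2 (by simp [Finset.mem_Icc]; omega)
    b3 (by simp [Finset.mem_Icc]; omega) b4 (by simp [Finset.mem_Icc]; omega)
    b5 (by simp [Finset.mem_Icc]; omega) b6 (by simp [Finset.mem_Icc]; omega) e1 e2

set_option maxHeartbeats 1000000 in
lemma linesL_sub : ∀ l ∈ LinesL, B l l = -1 ∧ B l h = 1 := by decide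

set_option maxHeartbeats 1000000 in
lemma rootsL_sub : ∀ l ∈ RootsL, B l l = -2 ∧ B l h = 0 := by decide

lemma hval0 : h 0 = 3 := rfl
lemma hval1 : h 1 = -1 := rfl
lemma hval2 : h 2 = -1 := rfl
lemma hval3 : h 3 = -1 := rfl
lemma hval4 : h 4 = -1 := rfl
lemma hval5 : h 5 = -1 := rfl
lemma hval6 : h 6 = -1 := rfl

lemma mem_lines_iff (l : Fin 7 → ℤ) : l ∈ Lines ↔ l ∈ LinesL := by
  constructor
  · rintro ⟨h1, h2⟩
    rw [B_apply] at h1 h2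
    rw [hval0, hval1, hval2, hval3, hval4, hval5, hval6] at h2
    rw [vec_eta l]
    exact line_key _ _ _ _ _ _ _ (by linarith) (by linarith)
  · intro hl
    exact (linesL_sub l hl : _)

lemma mem_R_iff (l : Fin 7 → ℤ) : l ∈ R ↔ l ∈ RootsL := by
  constructor
  · rintro ⟨h1, h2⟩
    rw [B_apply] at h1 h2
    rw [hval0, hval1, hval2, hval3, hval4, hval5, hval6] at h2
    rw [vec_eta l]
    exact root_key _ _ _ _ _ _ _ (by linarith) (by linarith)
  · intro hl
    exact (rootsL_sub l hl : _)

set_option maxHeartbeats 2000000 in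
lemma count_six : ∀ β ∈ RootsL,
    (LinesL.toFinset.filter (fun l => l - β ∈ LinesL.toFinset)).card = 6 := by decide

/-- Every root can be written as the difference of two line classes in exactly 6 ways. -/
theorem root_eq_diff_of_lines_in_six_ways :
    ∀ α ∈ R,
      {p : (Fin 7 → ℤ) × (Fin 7 → ℤ) |
        p.1 ∈ Lines ∧ p.2 ∈ Lines ∧ p.1 - p.2 = α}.ncard = 6 := by
  intro α hα
  have key : {p : (Fin 7 → ℤ) × (Fin 7 → ℤ) |
        p.1 ∈ Lines ∧ p.2 ∈ Lines ∧ p.1 - p.2 = α} =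
      (fun l => (l, l - α)) ''
        ↑(LinesL.toFinset.filter (fun l => l - α ∈ LinesL.toFinset)) := by
    ext p
    simp only [Set.mem_setOf_eq, Set.mem_image, Finset.coe_filter, List.mem_toFinset,
      Set.mem_setOf_eq]
    constructor
    · rintro ⟨hp1, hp2, hp3⟩
      refine ⟨p.1, ⟨(mem_lines_iff _).mp hp1, ?_⟩, ?_⟩
      · have : p.1 - α = p.2 := by rw [← hp3]; abel
        rw [this]; exact (mem_lines_iff _).mp hp2
      · have : p.1 - α = p.2 := by rw [← hp3]; abel
        rw [this]
    · rintro ⟨l, ⟨hl1, hl2⟩, rfl⟩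
      exact ⟨(mem_lines_iff _).mpr hl1, (mem_lines_iff _).mpr hl2, sub_sub_cancel l α⟩
  rw [key, Set.ncard_image_of_injective _
    (fun x y hxy => congrArg Prod.fst hxy), Set.ncard_coe_finset]
  exact count_six α ((mem_R_iff α).mp hα)
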